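/- Hohenberg–Kohn variational principle (finite formulation): for any two one-body potentials v, v' ∈ ℝ^m, F[p(v)] + ⟨ρ(v), v⟩ ≤ F[p(v')] + ⟨ρ(v'), v⟩, where F[p] = Σ_ν p_ν (β⁻¹ log p_ν + I_ν) is the intrinsic Helmholtz energy; equality holds if and only if p(v) = p(v'). In particular, the equilibrium density of potential v minimizes the grand potential Ω_v[ρ(v')] = F[p(v')] + ⟨ρ(v'), v⟩ over all densities representable by some potential v'. -/

import Mathlib

private lemma kl_aux {S : Type*} [Fintype S] (p q : S → ℝ)
    (hp : ∀ ν, 0 < p ν) (hq : ∀ ν, 0 < q ν)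
    (hps : ∑ ν, p ν = 1) (hqs : ∑ ν, q ν = 1) :
    0 ≤ ∑ ν, q ν * (Real.log (q ν) - Real.log (p ν)) ∧
    ((∑ ν, q ν * (Real.log (q ν) - Real.log (p ν))) = 0 ↔ q = p) := by
  set f : S → ℝ := fun ν => q ν * (Real.log (q ν) - Real.log (p ν)) + (p ν - q ν) with hf
  have key : ∀ ν, 0 ≤ f ν ∧ (f ν = 0 → q ν = p ν) := by
    intro ν
    have h2 : Real.log (p ν / q ν) = Real.log (p ν) - Real.log (q ν) :=
      Real.log_div (hp ν).ne' (hq ν).ne'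
    have h4 : q ν * (p ν / q ν - 1) = p ν - q ν := by
      rw [mul_sub, mul_div_cancel₀ _ (hq ν).ne', mul_one]
    by_cases hne : q ν = p ν
    · constructor
      · show (0:ℝ) ≤ q ν * (Real.log (q ν) - Real.log (p ν)) + (p ν - q ν)
        rw [hne]; ring_nf; exact le_refl 0
      · intro _; exact hne
    · have hr : p ν / q ν ≠ 1 := by
        intro h
        exact hne ((div_eq_one_iff_eq (hq ν).ne').mp h).symm
      have h1 : Real.log (p ν / q ν) < p ν / q ν - 1 :=
        Real.log_lt_sub_one_of_pos (div_pos (hp ν) (hq ν)) hr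
      rw [h2] at h1
      have h3 := mul_lt_mul_of_pos_left h1 (hq ν)
      rw [h4] at h3
      constructor
      · show (0:ℝ) ≤ q ν * (Real.log (q ν) - Real.log (p ν)) + (p ν - q ν)
        nlinarith
      · intro h0; exfalso
        have h0' : q ν * (Real.log (q ν) - Real.log (p ν)) + (p ν - q ν) = 0 := h0
        nlinarith
  have hsum : ∑ ν, f ν = ∑ ν, q ν * (Real.log (q ν) - Real.log (p ν)) := by
    simp only [hf, Finset.sum_add_distrib, Finset.sum_sub_distrib, hps, hqs]
    ring
  constructor
  · rw [← hsum]
    exact Finset.sum_nonneg fun ν _ => (key ν).1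
  · constructor
    · intro h
      rw [← hsum] at h
      have := (Finset.sum_eq_zero_iff_of_nonneg (fun ν _ => (key ν).1)).mp h
      funext ν
      exact (key ν).2 (this ν (Finset.mem_univ ν))
    · intro h
      subst h
      simp

/-- **Hohenberg–Kohn variational principle** (finite formulation).
With `β > 0`, microstates `S` (finite, nonempty), intrinsic energies `I`, instantaneous
densities `ρ̂ : S → ℝ^m`, total energies `E ν v = I ν + ⟨ρ̂ ν, v⟩`, Gibbs distributions
`p v ν = exp(-β E ν v)/∑ μ, exp(-β E μ v)`, equilibrium densities `ρ v = ∑ ν, p v ν • ρ̂ ν`,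
and intrinsic Helmholtz energy `F[q] = ∑ ν, q ν (β⁻¹ log (q ν) + I ν)`:
for any two potentials `v, v'`,
`F[p(v)] + ⟨ρ(v), v⟩ ≤ F[p(v')] + ⟨ρ(v'), v⟩`, with equality iff `p(v) = p(v')`;
i.e. the equilibrium density of `v` minimizes the grand potential
`Ω_v[ρ(v')] = F[p(v')] + ⟨ρ(v'), v⟩` over all `v'`-representable densities. -/
theorem hohenberg_kohn_variational
    {S : Type*} [Fintype S] [Nonempty S] {m : ℕ}
    (β : ℝ) (hβ : 0 < β) (I : S → ℝ) (ρhat : S → Fin m → ℝ)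
    (E : S → (Fin m → ℝ) → ℝ)
    (hE : ∀ ν v, E ν v = I ν + ∑ i, ρhat ν i * v i)
    (p : (Fin m → ℝ) → S → ℝ)
    (hp : ∀ v ν, p v ν = Real.exp (-β * E ν v) / ∑ μ, Real.exp (-β * E μ v))
    (ρ : (Fin m → ℝ) → Fin m → ℝ)
    (hρ : ∀ v i, ρ v i = ∑ ν, p v ν * ρhat ν i)
    (F : (S → ℝ) → ℝ)
    (hF : ∀ q : S → ℝ, F q = ∑ ν, q ν * (β⁻¹ * Real.log (q ν) + I ν))
    (v v' : Fin m → ℝ) :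
    F (p v) + (∑ i, ρ v i * v i) ≤ F (p v') + (∑ i, ρ v' i * v i) ∧
    (F (p v) + (∑ i, ρ v i * v i) = F (p v') + (∑ i, ρ v' i * v i) ↔ p v = p v') := by
  -- partition functions
  have hZpos : ∀ w : Fin m → ℝ, 0 < ∑ μ, Real.exp (-β * E μ w) :=
    fun w => Finset.sum_pos (fun μ _ => Real.exp_pos _) Finset.univ_nonempty
  have hppos : ∀ w ν, 0 < p w ν := by
    intro w ν
    rw [hp]
    exact div_pos (Real.exp_pos _) (hZpos w)
  have hpsum : ∀ w, ∑ ν, p w ν = 1 := by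
    intro w
    simp only [hp]
    rw [← Finset.sum_div, div_self (hZpos w).ne']
  -- log of Gibbs weight
  have hlog : ∀ w ν, Real.log (p w ν) = -β * E ν w - Real.log (∑ μ, Real.exp (-β * E μ w)) := by
    intro w ν
    rw [hp, Real.log_div (Real.exp_ne_zero _) (hZpos w).ne', Real.log_exp]
  -- grand potential identity
  have hG : ∀ w, F (p w) + (∑ i, ρ w i * v i) = ∑ ν, p w ν * (β⁻¹ * Real.log (p w ν) + E ν v) := by
    intro w
    have hswap : (∑ i, ρ w i * v i) = ∑ ν, p w ν * (∑ i, ρhat ν i * v i) := by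
      simp only [hρ, Finset.sum_mul]
      rw [Finset.sum_comm]
      congr 1; funext ν
      rw [Finset.mul_sum]
      congr 1; funext i
      ring
    rw [hF, hswap, ← Finset.sum_add_distrib]
    congr 1; funext ν
    rw [hE]
    ring
  -- rewrite via KL divergence
  have hKLform : ∀ w, F (p w) + (∑ i, ρ w i * v i) =
      β⁻¹ * (∑ ν, p w ν * (Real.log (p w ν) - Real.log (p v ν)))
        - β⁻¹ * Real.log (∑ μ, Real.exp (-β * E μ v)) := by
    intro w
    rw [hG w]
    have : ∀ ν, p w ν * (β⁻¹ * Real.log (p w ν) + E ν v)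
        = β⁻¹ * (p w ν * (Real.log (p w ν) - Real.log (p v ν)))
          - β⁻¹ * Real.log (∑ μ, Real.exp (-β * E μ v)) * p w ν := by
      intro ν
      have h := hlog v ν
      have hE' : E ν v = -β⁻¹ * (Real.log (p v ν) + Real.log (∑ μ, Real.exp (-β * E μ v))) := by
        rw [h]; field_simp; ring
      rw [hE']
      field_simp
      ring
    rw [Finset.sum_congr rfl (fun ν _ => this ν), Finset.sum_sub_distrib,
      ← Finset.mul_sum, ← Finset.mul_sum, hpsum w, mul_one]
  have hKLzero : (∑ ν, p v ν * (Real.log (p v ν) - Real.log (p v ν))) = 0 := by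
    simp
  have hkl := kl_aux (p v) (p v') (hppos v) (hppos v') (hpsum v) (hpsum v')
  have hdiff : F (p v') + (∑ i, ρ v' i * v i) - (F (p v) + (∑ i, ρ v i * v i))
      = β⁻¹ * (∑ ν, p v' ν * (Real.log (p v' ν) - Real.log (p v ν))) := by
    rw [hKLform v, hKLform v', hKLzero]
    ring
  have hβinv : 0 < β⁻¹ := inv_pos.mpr hβ
  constructor
  · nlinarith [hkl.1]
  · constructor
    · intro h
      have h0 : β⁻¹ * (∑ ν, p v' ν * (Real.log (p v' ν) - Real.log (p v ν))) = 0 := by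
        rw [← hdiff]; linarith
      have : (∑ ν, p v' ν * (Real.log (p v' ν) - Real.log (p v ν))) = 0 := by
        rcases mul_eq_zero.mp h0 with h1 | h1
        · exact absurd h1 hβinv.ne'
        · exact h1
      exact (hkl.2.mp this).symm
    · intro h
      have : p v' = p v := h.symm
      have h0 := hkl.2.mpr this
      rw [h0] at hdiff
      linarith [hdiff]
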